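/- Each ideal J_{α,ε} generated by pure powers of variables is m-irreducible: if J_{α,ε} = J ∩ K for monomial ideals J, K of A[ℝ≥0^d], then J_{α,ε} = J or J_{α,ε} = K. -/

import Mathlib

open scoped NNReal ENNReal

/-- The semigroup ring `R = A[ℝ≥0 ^ d]`. -/
abbrev SemiRng (A : Type*) [CommRing A] (d : ℕ) : Type _ :=
  AddMonoidAlgebra A (Fin d → ℝ≥0)

/-- The monomial `X^r` of `A[ℝ≥0 ^ d]`. -/
noncomputable def mono (A : Type*) [CommRing A] {d : ℕ} (r : Fin d → ℝ≥0) : SemiRng A d :=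
  AddMonoidAlgebra.single r 1

/-- An ideal of `A[ℝ≥0 ^ d]` is a monomial ideal if it is generated by a set of monomials. -/
def IsMonomialIdeal {A : Type*} [CommRing A] {d : ℕ} (I : Ideal (SemiRng A d)) : Prop :=
  ∃ E : Set (Fin d → ℝ≥0), I = Ideal.span (mono A '' E)

/-- The set of (exponent vectors of) monomials contained in an ideal. -/
def monSet (A : Type*) [CommRing A] {d : ℕ} (I : Ideal (SemiRng A d)) :
    Set (Fin d → ℝ≥0) :=
  {r | mono A r ∈ I}

/-- `geq e r a` means `r ≥_e a`: `r ≥ a` if `e = 0` (false), `r > a` if `e = 1` (true);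
no finite `r` satisfies `r ≥_e ∞`. -/
def geq (e : Bool) (r : ℝ≥0) (a : ℝ≥0∞) : Prop :=
  if e then a < (r : ℝ≥0∞) else a ≤ (r : ℝ≥0∞)

/-- The ideal `J_{i,a,e}` generated by the pure powers `X_i^r` with `r ≥_e a`. -/
noncomputable def Jsingle (A : Type*) [CommRing A] {d : ℕ} (i : Fin d) (a : ℝ≥0∞)
    (e : Bool) : Ideal (SemiRng A d) :=
  Ideal.span {f | ∃ r : ℝ≥0, geq e r a ∧ f = mono A (Pi.single i r)}

/-- The ideal `J_{a,e}` generated by all pure powers `X_i^r` with `r ≥_{e i} a i`. -/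
noncomputable def Jideal (A : Type*) [CommRing A] {d : ℕ} (a : Fin d → ℝ≥0∞)
    (e : Fin d → Bool) : Ideal (SemiRng A d) :=
  Ideal.span {f | ∃ (i : Fin d) (r : ℝ≥0), geq (e i) r (a i) ∧ f = mono A (Pi.single i r)}

/-- The ideal `I_{a,e}` generated by all monomials `X^r` with `r i ≥_{e i} a i` for all `i`. -/
noncomputable def Iideal (A : Type*) [CommRing A] {d : ℕ} (a : Fin d → ℝ≥0∞)
    (e : Fin d → Bool) : Ideal (SemiRng A d) :=
  Ideal.span {f | ∃ r : Fin d → ℝ≥0, (∀ i, geq (e i) (r i) (a i)) ∧ f = mono A r}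

/-- A monomial ideal is m-irreducible if whenever it is an intersection of two monomial
ideals, it equals one of them. -/
def MIrred {A : Type*} [CommRing A] {d : ℕ} (I : Ideal (SemiRng A d)) : Prop :=
  ∀ J K : Ideal (SemiRng A d), IsMonomialIdeal J → IsMonomialIdeal K →
    I = J ⊓ K → I = J ∨ I = K

variable {A : Type*} [CommRing A] [Nontrivial A] {d : ℕ}

lemma geq_mono {e : Bool} {r r' : ℝ≥0} {a : ℝ≥0∞} (h : geq e r a) (hle : r ≤ r') :
    geq e r' a := by
  unfold geq at *
  cases e <;> simp only [if_true, if_false, Bool.false_eq_true] at *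
  · exact h.trans (ENNReal.coe_le_coe.mpr hle)
  · exact h.trans_le (ENNReal.coe_le_coe.mpr hle)

lemma mono_mul_mono {A : Type*} [CommRing A] {d : ℕ} (s t : Fin d → ℝ≥0) :
    mono A s * mono A t = mono A (s + t) := by
  simp [mono, AddMonoidAlgebra.single_mul_single]

lemma mono_mem_of_le {A : Type*} [CommRing A] {d : ℕ} {I : Ideal (SemiRng A d)}
    {s u : Fin d → ℝ≥0} (hs : mono A s ∈ I) (hle : s ≤ u) : mono A u ∈ I := by
  have : mono A (u - s) * mono A s = mono A u := by
    rw [mono_mul_mono]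
    congr 1
    funext i
    exact tsub_add_cancel_of_le (hle i)
  exact this ▸ Ideal.mul_mem_left _ _ hs

lemma mono_mem_span_iff {A : Type*} [CommRing A] [Nontrivial A] {d : ℕ}
    {E : Set (Fin d → ℝ≥0)} {r : Fin d → ℝ≥0} :
    mono A r ∈ Ideal.span (mono A '' E) ↔ ∃ s ∈ E, s ≤ r := by
  constructor
  · intro hmem
    rw [Ideal.span, Submodule.mem_span_set] at hmem
    obtain ⟨c, hsupp, hsum⟩ := hmem
    have h1 : ((c.sum fun mi r => r • mi) : SemiRng A d).coeff r = 1 := by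
      rw [hsum]; simp [mono]
    rw [Finsupp.sum, AddMonoidAlgebra.coeff_sum, Finsupp.finset_sum_apply] at h1
    have : ∃ g ∈ c.support, ((c g • g : SemiRng A d).coeff r) ≠ 0 := by
      by_contra hcon
      push_neg at hcon
      rw [Finset.sum_eq_zero hcon] at h1
      exact one_ne_zero h1.symm
    obtain ⟨g, hg, hne⟩ := this
    obtain ⟨s, hsE, rfl⟩ := hsupp hg
    have hr : r ∈ (c (mono A s) • mono A s : SemiRng A d).coeff.support :=
      Finsupp.mem_support_iff.mpr hne
    have hsub := AddMonoidAlgebra.support_coeff_mul_subset (c (mono A s)) (mono A s)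
    rw [smul_eq_mul] at hr
    have hr2 := hsub hr
    have hss : (mono A s).coeff.support ⊆ {s} := Finsupp.support_single_subset
    rw [Finset.mem_add] at hr2
    obtain ⟨t, ht, s', hs', rfl⟩ := hr2
    have hseq : s' = s := Finset.mem_singleton.mp (hss hs')
    subst hseq
    exact ⟨s', hsE, fun i => le_add_self⟩
  · rintro ⟨s, hsE, hle⟩
    exact mono_mem_of_le (Ideal.subset_span (Set.mem_image_of_mem _ hsE)) hle

lemma Jideal_eq_span {A : Type*} [CommRing A] {d : ℕ} (a : Fin d → ℝ≥0∞) (e : Fin d → Bool) :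
    Jideal A a e = Ideal.span (mono A ''
      {v | ∃ (i : Fin d) (r : ℝ≥0), geq (e i) r (a i) ∧ v = Pi.single i r}) := by
  unfold Jideal
  congr 1
  ext f
  constructor
  · rintro ⟨i, r, hg, rfl⟩
    exact ⟨Pi.single i r, ⟨i, r, hg, rfl⟩, rfl⟩
  · rintro ⟨v, ⟨i, r, hg, rfl⟩, rfl⟩
    exact ⟨i, r, hg, rfl⟩

lemma mono_mem_Jideal_iff {A : Type*} [CommRing A] [Nontrivial A] {d : ℕ}
    {a : Fin d → ℝ≥0∞} {e : Fin d → Bool} {r : Fin d → ℝ≥0} :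
    mono A r ∈ Jideal A a e ↔ ∃ i, geq (e i) (r i) (a i) := by
  rw [Jideal_eq_span, mono_mem_span_iff]
  constructor
  · rintro ⟨s, ⟨i, r', hg, rfl⟩, hle⟩
    refine ⟨i, geq_mono hg ?_⟩
    have := hle i
    rwa [Pi.single_eq_same] at this
  · rintro ⟨i, hg⟩
    refine ⟨Pi.single i (r i), ⟨i, r i, hg, rfl⟩, fun j => ?_⟩
    by_cases hji : j = i
    · subst hji; rw [Pi.single_eq_same]
    · rw [Pi.single_eq_of_ne hji]; exact zero_le

theorem stmt10 (a : Fin d → ℝ≥0∞) (e : Fin d → Bool)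
    (J K : Ideal (SemiRng A d)) (hJ : IsMonomialIdeal J) (hK : IsMonomialIdeal K)
    (h : Jideal A a e = J ⊓ K) :
    Jideal A a e = J ∨ Jideal A a e = K := by
  obtain ⟨EJ, rfl⟩ := hJ
  obtain ⟨EK, rfl⟩ := hK
  have hle1 : Jideal A a e ≤ Ideal.span (mono A '' EJ) := h.le.trans inf_le_left
  have hle2 : Jideal A a e ≤ Ideal.span (mono A '' EK) := h.le.trans inf_le_right
  by_cases hJ' : ∀ s ∈ EJ, mono A s ∈ Jideal A a e
  · left
    refine le_antisymm hle1 (Ideal.span_le.mpr ?_)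
    rintro f ⟨s, hs, rfl⟩
    exact hJ' s hs
  by_cases hK' : ∀ t ∈ EK, mono A t ∈ Jideal A a e
  · right
    refine le_antisymm hle2 (Ideal.span_le.mpr ?_)
    rintro f ⟨t, ht, rfl⟩
    exact hK' t ht
  exfalso
  push_neg at hJ' hK'
  obtain ⟨s, hsE, hs⟩ := hJ'
  obtain ⟨t, htE, ht⟩ := hK'
  have huJ : mono A (s ⊔ t) ∈ Ideal.span (mono A '' EJ) :=
    mono_mem_of_le (Ideal.subset_span (Set.mem_image_of_mem _ hsE)) le_sup_left
  have huK : mono A (s ⊔ t) ∈ Ideal.span (mono A '' EK) :=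
    mono_mem_of_le (Ideal.subset_span (Set.mem_image_of_mem _ htE)) le_sup_right
  have hu : mono A (s ⊔ t) ∈ Jideal A a e := h ▸ ⟨huJ, huK⟩
  obtain ⟨i, hgi⟩ := mono_mem_Jideal_iff.mp hu
  have hmax : (s ⊔ t) i = s i ∨ (s ⊔ t) i = t i := by
    rcases le_total (s i) (t i) with hst | hst
    · right; exact sup_eq_right.mpr hst
    · left; exact sup_eq_left.mpr hst
  rcases hmax with hm | hm
  · exact hs (mono_mem_Jideal_iff.mpr ⟨i, hm ▸ hgi⟩)
  · exact ht (mono_mem_Jideal_iff.mpr ⟨i, hm ▸ hgi⟩)
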